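/- Let V be a finite-dimensional real inner product space and r ≥ 0. Let W^{r+1} be the space of multilinear maps t : V^{r+2} → V that are symmetric in the first r+1 arguments, whose total symmetrization vanishes (Σ_{σ ∈ S_{r+2}} t(u_{σ(1)},…,u_{σ(r+2)}) = 0 for all u's), and which satisfy ⟨t(u₁,…,u_{r+1},v),w⟩ = ⟨t(u₁,…,u_{r+1},w),v⟩ for all arguments. Let Y_{r+1} be the space of multilinear maps f : V^{r+3} → ℝ that are symmetric in their first two arguments, symmetric in their last r+1 arguments, and whose symmetrization over all arguments except the first vanishes: Σ_{σ ∈ S_{r+2}} f(x, z_{σ(1)},…,z_{σ(r+2)}) = 0 for all x, z₁,…,z_{r+2} ∈ V. Then the linear map sending t to the multilinear form f(x,y,u₁,…,u_{r+1}) := ⟨t(u₁,…,u_{r+1},x), y⟩ is a linear isomorphism from W^{r+1} onto Y_{r+1}, and it is equivariant for the natural orthogonal group actions: (g·t)(u₁,…,u_{r+2}) = g(t(g⁻¹u₁,…,g⁻¹u_{r+2})) on W^{r+1} and (g·f)(x₁,…,x_{r+3}) = f(g⁻¹x₁,…,g⁻¹x_{r+3}) on Y_{r+1}, for g in the orthogonal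 group of V. -/

import Mathlib

open scoped RealInnerProductSpace

/-- A function `t : V^k → V'` is multilinear (in the elementary sense). -/
def IsMultilinearFun {V V' : Type*} [AddCommGroup V] [Module ℝ V]
    [AddCommGroup V'] [Module ℝ V'] {k : ℕ} (t : (Fin k → V) → V') : Prop :=
  ∀ (m : Fin k → V) (i : Fin k) (x y : V) (c : ℝ),
    t (Function.update m i (x + c • y))
      = t (Function.update m i x) + c • t (Function.update m i y)

/-- Membership in the space `W^{r+1}`: multilinear maps `t : V^{r+2} → V`, symmetric in the
first `r+1` arguments, with vanishing total symmetrization, and satisfying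
`⟪t(u₁,…,u_{r+1},v),w⟫ = ⟪t(u₁,…,u_{r+1},w),v⟫`. -/
def MemWspace {V : Type*} [NormedAddCommGroup V] [InnerProductSpace ℝ V] (r : ℕ)
    (t : (Fin (r + 2) → V) → V) : Prop :=
  IsMultilinearFun t ∧
  (∀ (m : Fin (r + 2) → V) (σ : Equiv.Perm (Fin (r + 2))),
    σ (Fin.last (r + 1)) = Fin.last (r + 1) → t (m ∘ σ) = t m) ∧
  (∀ m : Fin (r + 2) → V, ∑ σ : Equiv.Perm (Fin (r + 2)), t (m ∘ σ) = 0) ∧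
  (∀ (u : Fin (r + 1) → V) (v w : V),
    ⟪t (Fin.snoc u v), w⟫ = ⟪t (Fin.snoc u w), v⟫)

/-- Membership in the space `Y_{r+1}`: multilinear forms `f : V^{r+3} → ℝ`, symmetric in the
first two arguments, symmetric in the last `r+1` arguments, whose symmetrization over all
arguments except the first vanishes. -/
def MemYspace {V : Type*} [NormedAddCommGroup V] [InnerProductSpace ℝ V] (r : ℕ)
    (f : (Fin (r + 3) → V) → ℝ) : Prop :=
  IsMultilinearFun f ∧
  (∀ m : Fin (r + 3) → V, f (m ∘ Equiv.swap 0 1) = f m) ∧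
  (∀ (m : Fin (r + 3) → V) (σ : Equiv.Perm (Fin (r + 3))),
    σ 0 = 0 → σ 1 = 1 → f (m ∘ σ) = f m) ∧
  (∀ (x : V) (z : Fin (r + 2) → V),
    ∑ σ : Equiv.Perm (Fin (r + 2)), f (Fin.cons x (z ∘ σ)) = 0)

namespace StmtAux

open Fin Function Equiv

section ML
variable {V V' : Type*} [AddCommGroup V] [Module ℝ V] [AddCommGroup V'] [Module ℝ V']
  {k : ℕ} {f : (Fin k → V) → V'}

lemma ml_zero (hf : IsMultilinearFun f) (m : Fin k → V) (i : Fin k) :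
    f (update m i 0) = 0 := by
  have h := hf m i 0 0 1
  rw [one_smul, add_zero, one_smul] at h
  exact (left_eq_add.mp h)

lemma ml_add (hf : IsMultilinearFun f) (m : Fin k → V) (i : Fin k) (x y : V) :
    f (update m i (x + y)) = f (update m i x) + f (update m i y) := by
  have h := hf m i x y 1
  rwa [one_smul, one_smul] at h

lemma ml_smul (hf : IsMultilinearFun f) (m : Fin k → V) (i : Fin k) (c : ℝ) (y : V) :
    f (update m i (c • y)) = c • f (update m i y) := by
  have h := hf m i 0 y c
  rwa [zero_add, ml_zero hf, zero_add] at h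
end ML

section Perms
variable {n : ℕ}

def extLast (τ : Perm (Fin n)) : Perm (Fin (n + 1)) where
  toFun := Fin.snoc (fun j => (τ j).castSucc) (Fin.last n)
  invFun := Fin.snoc (fun j => (τ⁻¹ j).castSucc) (Fin.last n)
  left_inv i := by
    induction i using Fin.lastCases with
    | last => simp
    | cast j => simp
  right_inv i := by
    induction i using Fin.lastCases with
    | last => simp
    | cast j => simp

@[simp] lemma extLast_castSucc (τ : Perm (Fin n)) (j : Fin n) :
    extLast τ j.castSucc = (τ j).castSucc := by
  simp [extLast, Equiv.coe_fn_mk]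

@[simp] lemma extLast_last (τ : Perm (Fin n)) :
    extLast τ (Fin.last n) = Fin.last n := by
  simp [extLast, Equiv.coe_fn_mk]

@[simp] lemma cons_one {α : Type*} (x : α) (g : Fin (n + 1) → α) :
    (Fin.cons x g : Fin (n + 2) → α) 1 = g 0 := by
  rw [← Fin.succ_zero_eq_one, Fin.cons_succ]

def extCons (τ : Perm (Fin n)) : Perm (Fin (n + 2)) where
  toFun := Fin.cons 0 (Fin.cons 1 (fun j => (τ j).succ.succ))
  invFun := Fin.cons 0 (Fin.cons 1 (fun j => (τ⁻¹ j).succ.succ))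
  left_inv i := by
    refine Fin.cases ?_ (fun j => ?_) i
    · simp
    · refine Fin.cases ?_ (fun k => ?_) j
      · simp
      · simp
  right_inv i := by
    refine Fin.cases ?_ (fun j => ?_) i
    · simp
    · refine Fin.cases ?_ (fun k => ?_) j
      · simp
      · simp

@[simp] lemma extCons_zero (τ : Perm (Fin n)) : extCons τ 0 = 0 := by
  simp [extCons, Equiv.coe_fn_mk]

@[simp] lemma extCons_one (τ : Perm (Fin n)) : extCons τ 1 = 1 := by
  simp [extCons, Equiv.coe_fn_mk]

@[simp] lemma extCons_succ_succ (τ : Perm (Fin n)) (j : Fin n) :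
    extCons τ j.succ.succ = (τ j).succ.succ := by
  simp [extCons, Equiv.coe_fn_mk]

def restLast (σ : Perm (Fin (n + 1))) (h : σ (Fin.last n) = Fin.last n) : Perm (Fin n) where
  toFun j := (σ j.castSucc).castPred
    (fun hc => (Fin.castSucc_lt_last j).ne (σ.injective (hc.trans h.symm)))
  invFun j := (σ⁻¹ j.castSucc).castPred
    (fun hc => (Fin.castSucc_lt_last j).ne (by
      rw [← h, ← hc, Equiv.Perm.coe_inv, Equiv.apply_symm_apply]))
  left_inv j := by
    apply Fin.castSucc_injective
    simp [Fin.castSucc_castPred]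
  right_inv j := by
    apply Fin.castSucc_injective
    simp [Fin.castSucc_castPred]

@[simp] lemma restLast_castSucc (σ : Perm (Fin (n + 1))) (h : σ (Fin.last n) = Fin.last n)
    (j : Fin n) : (restLast σ h j).castSucc = σ j.castSucc := by
  simp [restLast, Fin.castSucc_castPred]

def restSucc (σ : Perm (Fin (n + 1))) (h : σ 0 = 0) : Perm (Fin n) where
  toFun j := (σ j.succ).pred
    (fun hc => (Fin.succ_ne_zero j) (σ.injective (hc.trans h.symm)))
  invFun j := (σ⁻¹ j.succ).pred
    (fun hc => (Fin.succ_ne_zero j) (by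
      rw [← h, ← hc, Equiv.Perm.coe_inv, Equiv.apply_symm_apply]))
  left_inv j := by
    apply Fin.succ_injective
    simp [Fin.succ_pred]
  right_inv j := by
    apply Fin.succ_injective
    simp [Fin.succ_pred]

@[simp] lemma restSucc_succ (σ : Perm (Fin (n + 1))) (h : σ 0 = 0) (j : Fin n) :
    (restSucc σ h j).succ = σ j.succ := by
  simp [restSucc, Fin.succ_pred]

lemma restSucc_zero (σ : Perm (Fin (n + 2))) (h0 : σ 0 = 0) (h1 : σ 1 = 1) :
    restSucc σ h0 0 = 0 := by
  apply Fin.succ_injective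
  rw [restSucc_succ, Fin.succ_zero_eq_one, h1]

def restCons (σ : Perm (Fin (n + 2))) (h0 : σ 0 = 0) (h1 : σ 1 = 1) : Perm (Fin n) :=
  restSucc (restSucc σ h0) (restSucc_zero σ h0 h1)

@[simp] lemma restCons_succ_succ (σ : Perm (Fin (n + 2))) (h0 : σ 0 = 0) (h1 : σ 1 = 1)
    (j : Fin n) : (restCons σ h0 h1 j).succ.succ = σ j.succ.succ := by
  rw [restCons, restSucc_succ, restSucc_succ]

def rotPerm (n : ℕ) : Perm (Fin (n + 1)) where
  toFun := Fin.snoc Fin.succ 0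
  invFun := Fin.cons (Fin.last n) Fin.castSucc
  left_inv i := by
    induction i using Fin.lastCases with
    | last => simp
    | cast j => simp
  right_inv i := by
    refine Fin.cases ?_ (fun j => ?_) i
    · simp
    · simp

@[simp] lemma rotPerm_castSucc (j : Fin n) : rotPerm n j.castSucc = j.succ := by
  simp [rotPerm, Equiv.coe_fn_mk]

@[simp] lemma rotPerm_last : rotPerm n (Fin.last n) = 0 := by
  simp [rotPerm, Equiv.coe_fn_mk]

@[simp] lemma rotPerm_inv_zero : (rotPerm n)⁻¹ 0 = Fin.last n := by
  apply (rotPerm n).injective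
  rw [Equiv.Perm.coe_inv, Equiv.apply_symm_apply, rotPerm_last]

@[simp] lemma rotPerm_inv_succ (j : Fin n) : (rotPerm n)⁻¹ j.succ = j.castSucc := by
  apply (rotPerm n).injective
  rw [Equiv.Perm.coe_inv, Equiv.apply_symm_apply, rotPerm_castSucc]


lemma succ_succ_ne_one' {n : ℕ} (j : Fin n) : (j.succ.succ : Fin (n + 2)) ≠ 1 := by
  intro h
  exact Fin.succ_ne_zero j (Fin.succ_injective _ (h.trans (Fin.succ_zero_eq_one).symm))

end Perms

section Tuples
variable {n : ℕ} {α : Type*}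

lemma snoc_comp_extLast (u : Fin n → α) (x : α) (τ : Perm (Fin n)) :
    (Fin.snoc u x : Fin (n + 1) → α) ∘ (extLast τ) = Fin.snoc (u ∘ τ) x := by
  funext i
  induction i using Fin.lastCases with
  | last => simp
  | cast j => simp

lemma cons_cons_comp_extCons (a b : α) (u : Fin n → α) (τ : Perm (Fin n)) :
    (Fin.cons a (Fin.cons b u) : Fin (n + 2) → α) ∘ (extCons τ)
      = Fin.cons a (Fin.cons b (u ∘ τ)) := by
  funext i
  refine Fin.cases ?_ (fun j => ?_) i
  · simp
  · refine Fin.cases ?_ (fun k => ?_) j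
    · simp
    · simp

lemma cons_cons_comp_swap (a b : α) (u : Fin n → α) :
    (Fin.cons a (Fin.cons b u) : Fin (n + 2) → α) ∘ (Equiv.swap 0 1)
      = Fin.cons b (Fin.cons a u) := by
  funext i
  refine Fin.cases ?_ (fun j => ?_) i
  · simp [Equiv.swap_apply_left]
  · refine Fin.cases ?_ (fun k => ?_) j
    · simp [Fin.succ_zero_eq_one, Equiv.swap_apply_right]
    · have h0 : (k.succ.succ : Fin (n + 2)) ≠ 0 := Fin.succ_ne_zero _
      have h1 : (k.succ.succ : Fin (n + 2)) ≠ 1 := Fin.succ_succ_ne_one k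
      simp [Equiv.swap_apply_of_ne_of_ne h0 h1]

lemma update_cons_one {α : Type*} (a b z : α) (u : Fin n → α) :
    Function.update (Fin.cons a (Fin.cons b u) : Fin (n + 2) → α) 1 z
      = Fin.cons a (Fin.cons z u) := by
  rw [← Fin.succ_zero_eq_one, ← Fin.cons_update, Fin.update_cons_zero]

lemma cons_comp_rot (_x : α) (w : Fin (n + 1) → α) :
    (Fin.snoc (fun j : Fin n => w j.succ) (w 0) : Fin (n + 1) → α) = w ∘ (rotPerm n) := by
  funext i
  induction i using Fin.lastCases with
  | last => simp
  | cast j => simp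

end Tuples
end StmtAux

set_option maxHeartbeats 1000000 in
/-- The map `t ↦ f`, `f(x,y,u₁,…,u_{r+1}) := ⟪t(u₁,…,u_{r+1},x),y⟫`, is a
linear isomorphism from `W^{r+1}` onto `Y_{r+1}`, equivariant for the natural actions of the
orthogonal group of `V`. -/
theorem Wspace_iso_Yspace
    {V : Type*} [NormedAddCommGroup V] [InnerProductSpace ℝ V] [FiniteDimensional ℝ V]
    (r : ℕ) :
    -- the map sends `W^{r+1}` into `Y_{r+1}`:
    (∀ t : (Fin (r + 2) → V) → V, MemWspace r t →
      MemYspace r (fun m : Fin (r + 3) → V =>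
        ⟪t (Fin.snoc (fun j : Fin (r + 1) => m j.succ.succ) (m 0)), m 1⟫)) ∧
    -- it is bijective from `W^{r+1}` onto `Y_{r+1}` (it is linear by its very formula,
    -- the inner product being bilinear):
    (∀ f : (Fin (r + 3) → V) → ℝ, MemYspace r f →
      ∃! t : (Fin (r + 2) → V) → V, MemWspace r t ∧
        ∀ (x y : V) (u : Fin (r + 1) → V),
          f (Fin.cons x (Fin.cons y u)) = ⟪t (Fin.snoc u x), y⟫) ∧
    -- equivariance for the orthogonal group actions
    -- `(g·t)(u₁,…,u_{r+2}) = g(t(g⁻¹u₁,…,g⁻¹u_{r+2}))` and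
    -- `(g·f)(x₁,…,x_{r+3}) = f(g⁻¹x₁,…,g⁻¹x_{r+3})`:
    (∀ (g : V ≃ₗᵢ[ℝ] V) (t : (Fin (r + 2) → V) → V), MemWspace r t →
      ∀ (x y : V) (u : Fin (r + 1) → V),
        ⟪g (t (fun i : Fin (r + 2) => g.symm ((Fin.snoc u x : Fin (r + 2) → V) i))), y⟫
          = ⟪t (Fin.snoc (fun j : Fin (r + 1) => g.symm (u j)) (g.symm x)), g.symm y⟫) := by
  classical
  open StmtAux Fin Function Equiv in
  have h10 : (1 : Fin (r + 3)) ≠ 0 := by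
    rw [← Fin.succ_zero_eq_one]; exact Fin.succ_ne_zero 0
  refine ⟨?_, ?_, ?_⟩
  · -- Part 1
    rintro t ⟨tml, tsym, ttot, tinn⟩
    refine ⟨?_, ?_, ?_, ?_⟩
    · -- multilinearity of f
      intro m i x y c
      set u : Fin (r + 1) → V := fun j => m j.succ.succ with hu
      induction i using Fin.cases with
      | zero =>
        have e0 : ∀ w : V,
            (fun j : Fin (r + 1) => Function.update m 0 w j.succ.succ) = u :=
          fun w => funext fun j => Function.update_of_ne (Fin.succ_ne_zero _) _ _
        have e1 : ∀ w : V, Function.update m 0 w 1 = m 1 :=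
          fun w => Function.update_of_ne h10 _ _
        simp only [e0, e1, Function.update_self]
        have hs : ∀ w : V, (Fin.snoc u w : Fin (r + 2) → V)
            = Function.update (Fin.snoc u x) (Fin.last (r + 1)) w :=
          fun w => by rw [Fin.update_snoc_last]
        rw [hs (x + c • y), hs y, tml (Fin.snoc u x) (Fin.last (r + 1)) x y c,
          Fin.update_snoc_last, inner_add_left, real_inner_smul_left, smul_eq_mul]
      | succ i' =>
        induction i' using Fin.cases with
        | zero =>
          rw [Fin.succ_zero_eq_one]
          have e0 : ∀ w : V,
              (fun j : Fin (r + 1) => Function.update m 1 w j.succ.succ) = u :=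
            fun w => funext fun j =>
              Function.update_of_ne (StmtAux.succ_succ_ne_one' j) _ _
          have e1 : ∀ w : V, Function.update m 1 w 0 = m 0 :=
            fun w => Function.update_of_ne (Ne.symm h10) _ _
          simp only [e0, e1, Function.update_self]
          rw [inner_add_right, real_inner_smul_right, smul_eq_mul]
        | succ k =>
          have e0 : ∀ w : V,
              (fun j : Fin (r + 1) => Function.update m k.succ.succ w j.succ.succ)
                = Function.update u k w := by
            intro w; funext j
            rcases eq_or_ne j k with rfl | hjk
            · simp
            · rw [Function.update_of_ne
                (fun hc => hjk (Fin.succ_injective _ (Fin.succ_injective _ hc))) _ _,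
                Function.update_of_ne hjk _ _]
          have e1 : ∀ w : V, Function.update m k.succ.succ w 0 = m 0 :=
            fun w => Function.update_of_ne (Ne.symm (Fin.succ_ne_zero _)) _ _
          have e2 : ∀ w : V, Function.update m k.succ.succ w 1 = m 1 :=
            fun w => Function.update_of_ne (Ne.symm (StmtAux.succ_succ_ne_one' k)) _ _
          simp only [e0, e1, e2]
          rw [Fin.snoc_update, Fin.snoc_update, Fin.snoc_update,
            tml (Fin.snoc u (m 0)) k.castSucc x y c,
            inner_add_left, real_inner_smul_left, smul_eq_mul]
    · -- symmetry in first two arguments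
      intro m
      have k2 : ∀ j : Fin (r + 1),
          Equiv.swap (0 : Fin (r + 3)) 1 j.succ.succ = j.succ.succ :=
        fun j => Equiv.swap_apply_of_ne_of_ne (Fin.succ_ne_zero _) (StmtAux.succ_succ_ne_one' j)
      simp only [Function.comp_apply, k2, Equiv.swap_apply_left, Equiv.swap_apply_right]
      exact tinn _ (m 1) (m 0)
    · -- symmetry in last r+1 arguments
      intro m σ h0 h1
      set τ := StmtAux.restCons σ h0 h1 with hτ
      set u : Fin (r + 1) → V := fun j => m j.succ.succ with hu
      have e0 : (fun j : Fin (r + 1) => (m ∘ σ) j.succ.succ) = u ∘ τ := by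
        funext j
        show m (σ j.succ.succ) = m ((τ j).succ.succ)
        rw [hτ, StmtAux.restCons_succ_succ]
      have e1 : (m ∘ σ) 0 = m 0 := by show m (σ 0) = m 0; rw [h0]
      have e2 : (m ∘ σ) 1 = m 1 := by show m (σ 1) = m 1; rw [h1]
      simp only [e0, e1, e2]
      rw [← StmtAux.snoc_comp_extLast u (m 0) τ,
        tsym _ (StmtAux.extLast τ) (StmtAux.extLast_last τ)]
    · -- symmetrization over all but the first argument vanishes
      intro x z
      set ρ : Equiv.Perm (Fin (r + 2)) := StmtAux.rotPerm (r + 1) with hρ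
      calc ∑ σ : Equiv.Perm (Fin (r + 2)),
            ⟪t (Fin.snoc (fun j : Fin (r + 1) =>
                  (Fin.cons x (z ∘ ⇑σ) : Fin (r + 3) → V) j.succ.succ)
                ((Fin.cons x (z ∘ ⇑σ) : Fin (r + 3) → V) 0)),
              (Fin.cons x (z ∘ ⇑σ) : Fin (r + 3) → V) 1⟫
          = ∑ σ : Equiv.Perm (Fin (r + 2)), ⟪t (z ∘ ⇑(σ * ρ)), x⟫ := by
            refine Finset.sum_congr rfl fun σ _ => ?_
            simp only [Fin.cons_zero, StmtAux.cons_one, Fin.cons_succ]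
            rw [tinn, StmtAux.cons_comp_rot x (z ∘ ⇑σ)]
            have hcomp : (z ∘ ⇑σ) ∘ ⇑(StmtAux.rotPerm (r + 1)) = z ∘ ⇑(σ * ρ) := by
              funext i
              simp [hρ, Equiv.Perm.mul_apply]
            rw [hcomp]
        _ = ⟪∑ σ : Equiv.Perm (Fin (r + 2)), t (z ∘ ⇑(σ * ρ)), x⟫ := (sum_inner _ _ _).symm
        _ = 0 := by
            have hsum : ∑ σ : Equiv.Perm (Fin (r + 2)), t (z ∘ ⇑(σ * ρ))
                = ∑ σ : Equiv.Perm (Fin (r + 2)), t (z ∘ ⇑σ) :=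
              Fintype.sum_equiv (Equiv.mulRight ρ) _ _ (fun σ => rfl)
            rw [hsum, ttot z, inner_zero_left]
  · -- Part 2
    rintro f ⟨fml, fswap, fsym, ftot⟩
    set F : (Fin (r + 2) → V) → V → ℝ :=
      fun m y => f (Fin.cons (m (Fin.last (r + 1))) (Fin.cons y (Fin.init m))) with hF
    have Fadd : ∀ m y z, F m (y + z) = F m y + F m z := by
      intro m y z
      have h := StmtAux.ml_add fml
        (Fin.cons (m (Fin.last (r + 1))) (Fin.cons y (Fin.init m))) 1 y z
      rwa [StmtAux.update_cons_one, StmtAux.update_cons_one, StmtAux.update_cons_one] at h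
    have Fsmul : ∀ m (c : ℝ) y, F m (c • y) = c * F m y := by
      intro m c y
      have h := StmtAux.ml_smul fml
        (Fin.cons (m (Fin.last (r + 1))) (Fin.cons y (Fin.init m))) 1 c y
      rwa [StmtAux.update_cons_one, StmtAux.update_cons_one, smul_eq_mul] at h
    set t : (Fin (r + 2) → V) → V := fun m =>
      (InnerProductSpace.toDual ℝ V).symm
        (LinearMap.toContinuousLinearMap
          { toFun := F m, map_add' := Fadd m,
            map_smul' := fun c y => by simpa using Fsmul m c y }) with ht
    have tspec : ∀ m y, ⟪t m, y⟫ = F m y := by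
      intro m y
      rw [ht]
      exact InnerProductSpace.toDual_symm_apply
    have tform : ∀ (x y : V) (u : Fin (r + 1) → V),
        f (Fin.cons x (Fin.cons y u)) = ⟪t (Fin.snoc u x), y⟫ := by
      intro x y u
      rw [tspec, hF]
      simp only [Fin.snoc_last, Fin.init_snoc]
    refine ⟨t, ⟨⟨?_, ?_, ?_, ?_⟩, tform⟩, ?_⟩
    · -- multilinearity of t
      intro m i x y c
      apply ext_inner_right ℝ
      intro w
      rw [inner_add_left, real_inner_smul_left, tspec, tspec, tspec, hF]
      induction i using Fin.lastCases with
      | last =>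
        simp only [Fin.init_update_last, Function.update_self]
        simpa [Fin.update_cons_zero, smul_eq_mul] using
          fml (Fin.cons x (Fin.cons w (Fin.init m))) 0 x y c
      | cast k =>
        have hne : Fin.last (r + 1) ≠ k.castSucc := (Fin.castSucc_lt_last k).ne'
        simp only [Fin.init_update_castSucc, Function.update_of_ne hne]
        have key := fml (Fin.cons (m (Fin.last (r + 1)))
          (Fin.cons w (Fin.init m))) k.succ.succ x y c
        rw [← Fin.cons_update, ← Fin.cons_update, ← Fin.cons_update, ← Fin.cons_update,
          ← Fin.cons_update, ← Fin.cons_update] at key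
        simpa [smul_eq_mul] using key
    · -- symmetry in first r+1 arguments
      intro m σ hσ
      apply ext_inner_right ℝ
      intro w
      rw [tspec, tspec, hF]
      have e1 : (m ∘ σ) (Fin.last (r + 1)) = m (Fin.last (r + 1)) := by simp [hσ]
      have e2 : Fin.init (m ∘ σ) = Fin.init m ∘ (StmtAux.restLast σ hσ) := by
        funext j
        show m (σ j.castSucc) = m ((StmtAux.restLast σ hσ j).castSucc)
        rw [StmtAux.restLast_castSucc]
      simp only [e1, e2]
      rw [← StmtAux.cons_cons_comp_extCons, fsym _ (StmtAux.extCons (StmtAux.restLast σ hσ))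
        (StmtAux.extCons_zero _) (StmtAux.extCons_one _)]
    · -- total symmetrization of t vanishes
      intro m
      apply ext_inner_right ℝ
      intro w
      rw [sum_inner, inner_zero_left]
      set ρ : Equiv.Perm (Fin (r + 2)) := StmtAux.rotPerm (r + 1) with hρ
      calc ∑ σ : Equiv.Perm (Fin (r + 2)), ⟪t (m ∘ ⇑σ), w⟫
          = ∑ σ : Equiv.Perm (Fin (r + 2)), f (Fin.cons w (m ∘ ⇑(σ * ρ⁻¹))) := by
            refine Finset.sum_congr rfl fun σ _ => ?_
            rw [tspec]
            simp only [hF]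
            have harg : (Fin.cons ((m ∘ ⇑σ) (Fin.last (r + 1))) (Fin.init (m ∘ ⇑σ))
                : Fin (r + 2) → V) = m ∘ ⇑(σ * ρ⁻¹) := by
              funext i
              refine Fin.cases ?_ (fun j => ?_) i
              · simp [hρ, Equiv.Perm.mul_apply, -Equiv.Perm.coe_inv]
              · show Fin.init (m ∘ ⇑σ) j = _
                simp [hρ, Fin.init, Equiv.Perm.mul_apply, -Equiv.Perm.coe_inv]
            have hsw : (Fin.cons ((m ∘ ⇑σ) (Fin.last (r + 1)))
                (Fin.cons w (Fin.init (m ∘ ⇑σ))) : Fin (r + 3) → V)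
                = (Fin.cons w (Fin.cons ((m ∘ ⇑σ) (Fin.last (r + 1)))
                    (Fin.init (m ∘ ⇑σ)))) ∘ Equiv.swap 0 1 :=
              (StmtAux.cons_cons_comp_swap w _ _).symm
            rw [hsw, fswap, harg]
        _ = ∑ σ : Equiv.Perm (Fin (r + 2)), f (Fin.cons w (m ∘ ⇑σ)) :=
            Fintype.sum_equiv (Equiv.mulRight ρ⁻¹) _ _ (fun σ => rfl)
        _ = 0 := ftot w m
    · -- inner symmetry of t
      intro u v w
      rw [tspec, tspec, hF]
      simp only [Fin.snoc_last, Fin.init_snoc]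
      rw [← StmtAux.cons_cons_comp_swap w v u, fswap]
    · -- uniqueness
      rintro t' ⟨_, hform'⟩
      funext m
      rw [← Fin.snoc_init_self m]
      apply ext_inner_right ℝ
      intro y
      rw [← hform', tform]
  · -- Part 3: equivariance
    intro g t _ x y u
    have h1 : (fun i : Fin (r + 2) => g.symm ((Fin.snoc u x : Fin (r + 2) → V) i))
        = Fin.snoc (fun j : Fin (r + 1) => g.symm (u j)) (g.symm x) := by
      show (⇑g.symm ∘ Fin.snoc u x) = _
      rw [Fin.comp_snoc]
      rfl
    rw [h1]
    conv_lhs => rw [show y = g (g.symm y) from (g.apply_symm_apply y).symm]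
    exact g.inner_map_map _ _
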